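/- Fix d ≥ 1, K₁,...,K_d ≥ 1, T ≥ max_i K_i, and 0 < δ < (min_i K_i)/2. For a bounded function F: ℝ^d → ℂ, the difference between ∫_{[0,T]^d} (∑_{k∈ℤ^d} g_δ(t − Kk)) F(t) dt and ∑_{k∈ℤ^d, Kk∈[0,T]^d} ∫_{ℝ^d} g_δ(t − Kk) F(t) dt is bounded in absolute value by C·‖F‖_∞·T^{d-1}·(max_i K_i)/(K₁⋯K_d), where C depends only on d. -/

import Mathlib

open MeasureTheory Set

lemma hat_nonneg (δ c x : ℝ) : 0 ≤ max (δ⁻¹ ^ 2 * (δ - |x - c|)) 0 := le_max_right _ _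

lemma hat_eq_zero {δ c x : ℝ} (h : δ ≤ |x - c|) :
    max (δ⁻¹ ^ 2 * (δ - |x - c|)) 0 = 0 := by
  apply max_eq_right
  apply mul_nonpos_of_nonneg_of_nonpos (by positivity)
  linarith

lemma hat_le {δ c x : ℝ} (hδ : 0 < δ) : max (δ⁻¹ ^ 2 * (δ - |x - c|)) 0 ≤ δ⁻¹ := by
  apply max_le _ (by positivity)
  calc δ⁻¹ ^ 2 * (δ - |x - c|) ≤ δ⁻¹ ^ 2 * δ := by
        apply mul_le_mul_of_nonneg_left _ (by positivity)
        have := abs_nonneg (x - c); linarith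
    _ = δ⁻¹ := by field_simp

lemma hat_continuous (δ c : ℝ) : Continuous (fun x : ℝ => max (δ⁻¹ ^ 2 * (δ - |x - c|)) 0) := by
  fun_prop

lemma hat_integrable {δ : ℝ} (c : ℝ) (hδ : 0 < δ) :
    Integrable (fun x : ℝ => max (δ⁻¹ ^ 2 * (δ - |x - c|)) 0) := by
  apply (hat_continuous δ c).integrable_of_hasCompactSupport
  apply HasCompactSupport.intro (isCompact_Icc (a := c - δ) (b := c + δ))
  intro x hx
  apply hat_eq_zero
  simp only [mem_Icc, not_and_or, not_le] at hx
  rcases hx with hx | hx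
  · rw [abs_sub_comm, abs_of_pos (by linarith)]; linarith
  · rw [abs_of_pos (by linarith)]; linarith

lemma hat_integral_le {δ : ℝ} (c : ℝ) (hδ : 0 < δ) :
    ∫ x : ℝ, max (δ⁻¹ ^ 2 * (δ - |x - c|)) 0 ≤ 2 := by
  have h1 : ∫ x : ℝ, max (δ⁻¹ ^ 2 * (δ - |x - c|)) 0
      ≤ ∫ x : ℝ, (Icc (c - δ) (c + δ)).indicator (fun _ => δ⁻¹) x := by
    apply integral_mono (hat_integrable c hδ)
    · exact (integrable_indicator_iff measurableSet_Icc).2 (integrableOn_const (by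
        rw [Real.volume_Icc]; exact ENNReal.ofReal_ne_top))
    · intro x
      by_cases hx : x ∈ Icc (c - δ) (c + δ)
      · rw [indicator_of_mem hx]; exact hat_le hδ
      · rw [indicator_of_notMem hx]
        refine le_of_eq (hat_eq_zero ?_)
        simp only [mem_Icc, not_and_or, not_le] at hx
        rcases hx with hx | hx
        · rw [abs_sub_comm, abs_of_pos (by linarith)]; linarith
        · rw [abs_of_pos (by linarith)]; linarith
  have h2 : ∫ x : ℝ, (Icc (c - δ) (c + δ)).indicator (fun _ => δ⁻¹) x = 2 * δ * δ⁻¹ := by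
    rw [integral_indicator_const _ measurableSet_Icc, measureReal_def, Real.volume_Icc]
    rw [ENNReal.toReal_ofReal (by linarith)]
    rw [smul_eq_mul]; ring
  rw [h2] at h1
  calc _ ≤ 2 * δ * δ⁻¹ := h1
    _ = 2 := by field_simp

section Dim
variable {d : ℕ} {δ : ℝ} (c : Fin d → ℝ)

lemma hatd_nonneg (t : Fin d → ℝ) : 0 ≤ ∏ i, max (δ⁻¹ ^ 2 * (δ - |t i - c i|)) 0 :=
  Finset.prod_nonneg fun i _ => hat_nonneg δ (c i) (t i)

lemma hatd_integrable (hδ : 0 < δ) :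
    Integrable (fun t : Fin d → ℝ => ∏ i, max (δ⁻¹ ^ 2 * (δ - |t i - c i|)) 0) :=
  Integrable.fintype_prod (f := fun i x => max (δ⁻¹ ^ 2 * (δ - |x - c i|)) 0)
    fun i => hat_integrable (c i) hδ

lemma hatd_integral_le (hδ : 0 < δ) :
    ∫ t : Fin d → ℝ, ∏ i, max (δ⁻¹ ^ 2 * (δ - |t i - c i|)) 0 ≤ 2 ^ d := by
  rw [integral_fintype_prod_volume_eq_prod (ι := Fin d)
    (f := fun i x => max (δ⁻¹ ^ 2 * (δ - |x - c i|)) 0)]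
  calc ∏ i, ∫ x : ℝ, max (δ⁻¹ ^ 2 * (δ - |x - c i|)) 0
      ≤ ∏ _i : Fin d, (2 : ℝ) := by
        apply Finset.prod_le_prod
        · exact fun i _ => integral_nonneg fun x => hat_nonneg δ (c i) x
        · exact fun i _ => hat_integral_le (c i) hδ
    _ = 2 ^ d := by simp

lemma hatdF_integrable (hδ : 0 < δ) {M : ℝ} (F : (Fin d → ℝ) → ℂ) (hFm : Measurable F)
    (hFb : ∀ t, ‖F t‖ ≤ M) :
    Integrable (fun t : Fin d → ℝ =>
      ((∏ i, max (δ⁻¹ ^ 2 * (δ - |t i - c i|)) 0 : ℝ) : ℂ) * F t) := by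
  have h1 : Integrable (fun t : Fin d → ℝ =>
      ((∏ i, max (δ⁻¹ ^ 2 * (δ - |t i - c i|)) 0 : ℝ) : ℂ)) :=
    (hatd_integrable c hδ).ofReal
  have := h1.bdd_mul hFm.aestronglyMeasurable (ae_of_all _ hFb)
  simpa [mul_comm] using this

lemma hatdF_norm_integral_le (hδ : 0 < δ) {M : ℝ} (hM : 0 ≤ M) (F : (Fin d → ℝ) → ℂ)
    (hFm : Measurable F) (hFb : ∀ t, ‖F t‖ ≤ M) (s : Set (Fin d → ℝ)) :
    ‖∫ t in s, ((∏ i, max (δ⁻¹ ^ 2 * (δ - |t i - c i|)) 0 : ℝ) : ℂ) * F t‖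
      ≤ 2 ^ d * M := by
  have hint := hatdF_integrable c hδ F hFm hFb
  have h1 : ‖∫ t in s, ((∏ i, max (δ⁻¹ ^ 2 * (δ - |t i - c i|)) 0 : ℝ) : ℂ) * F t‖
      ≤ ∫ t in s, (∏ i, max (δ⁻¹ ^ 2 * (δ - |t i - c i|)) 0) * M := by
    apply norm_integral_le_of_norm_le (((hatd_integrable c hδ).mul_const M).integrableOn)
    filter_upwards with t
    rw [norm_mul, Complex.norm_real, Real.norm_of_nonneg (hatd_nonneg c t)]
    exact mul_le_mul_of_nonneg_left (hFb t) (hatd_nonneg c t)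
  refine h1.trans ?_
  have h2 : ∫ t in s, (∏ i, max (δ⁻¹ ^ 2 * (δ - |t i - c i|)) 0) * M
      ≤ ∫ t : Fin d → ℝ, (∏ i, max (δ⁻¹ ^ 2 * (δ - |t i - c i|)) 0) * M := by
    apply setIntegral_le_integral ((hatd_integrable c hδ).mul_const M)
    filter_upwards with t using mul_nonneg (hatd_nonneg c t) hM
  refine h2.trans ?_
  rw [integral_mul_const]
  exact mul_le_mul_of_nonneg_right (hatd_integral_le c hδ) hM

end Dim


theorem hat_sum_integral_boundary_error (d : ℕ) (hd : 1 ≤ d) :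
    ∃ C : ℝ, 0 < C ∧ ∀ (K : Fin d → ℝ) (T δ M : ℝ), (∀ i, 1 ≤ K i) →
      (∀ i, K i ≤ T) → 0 < δ → (∀ i, δ < K i / 2) → 0 ≤ M →
      ∀ F : (Fin d → ℝ) → ℂ, Measurable F → (∀ t, ‖F t‖ ≤ M) →
      ‖(∫ t in {t : Fin d → ℝ | ∀ i, t i ∈ Icc 0 T},
            ((∑' k : Fin d → ℤ,
                ∏ i : Fin d, max (δ⁻¹ ^ 2 * (δ - |t i - K i * k i|)) 0 : ℝ) : ℂ)
              * F t) -
          ∑' k : {k : Fin d → ℤ // ∀ i, (K i * k i : ℝ) ∈ Icc 0 T},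
            ∫ t : Fin d → ℝ,
              ((∏ i : Fin d,
                  max (δ⁻¹ ^ 2 * (δ - |t i - K i * (k : Fin d → ℤ) i|)) 0 : ℝ) : ℂ)
                * F t‖ ≤
        C * M * T ^ (d - 1) * (⨆ i, K i) / ∏ i, K i := by
  have hd0 : (0:ℝ) < d := by exact_mod_cast hd
  refine ⟨(d : ℝ) * 2 ^ (d + 2) * 3 ^ (d - 1), by positivity, ?_⟩
  intro K T δ M hK1 hKT hδ hδK hM F hFm hFb
  classical
  have hK0 : ∀ i, (0:ℝ) < K i := fun i => lt_of_lt_of_le one_pos (hK1 i)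
  have i0 : Fin d := ⟨0, hd⟩
  have hT1 : (1:ℝ) ≤ T := le_trans (hK1 i0) (hKT i0)
  have hT0 : (0:ℝ) < T := lt_of_lt_of_le one_pos hT1
  have hprodK : (0:ℝ) < ∏ j, K j := Finset.prod_pos fun j _ => hK0 j
  have hsupK : ∀ i, K i ≤ ⨆ j, K j := fun i =>
    le_ciSup (Set.Finite.bddAbove (Set.finite_range K)) i
  set A : Finset (Fin d → ℤ) :=
    Fintype.piFinset fun i => Finset.Icc ⌈-δ / K i⌉ ⌊(T + δ) / K i⌋ with hA
  have memA : ∀ k : Fin d → ℤ, k ∈ A ↔ ∀ i, -δ ≤ K i * k i ∧ K i * k i ≤ T + δ := by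
    intro k
    simp only [hA, Fintype.mem_piFinset, Finset.mem_Icc]
    refine forall_congr' fun i => ?_
    rw [Int.ceil_le, Int.le_floor, div_le_iff₀ (hK0 i), le_div_iff₀ (hK0 i)]
    have hc := mul_comm ((k i : ℝ)) (K i)
    constructor <;> rintro ⟨h1, h2⟩ <;> exact ⟨by linarith, by linarith⟩
  set B : Set (Fin d → ℝ) := {t | ∀ i, t i ∈ Icc 0 T} with hBdef
  have hB : MeasurableSet B := by
    have : B = Set.pi Set.univ (fun _ => Icc (0:ℝ) T) := by
      ext t; simp [hBdef, Set.mem_univ_pi, Pi.le_def, forall_and]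
    rw [this]; exact MeasurableSet.univ_pi fun i => measurableSet_Icc
  -- vanishing of hats for k outside A, on B
  have hzero : ∀ k ∉ A, ∀ t ∈ B, (∏ i, max (δ⁻¹ ^ 2 * (δ - |t i - K i * k i|)) 0 : ℝ) = 0 := by
    intro k hk t ht
    rw [memA] at hk
    push_neg at hk
    obtain ⟨i, hi⟩ := hk
    apply Finset.prod_eq_zero (Finset.mem_univ i)
    apply hat_eq_zero
    have ht' : t i ∈ Icc 0 T := ht i
    by_cases h : -δ ≤ K i * k i
    · have h2 := hi h
      calc δ ≤ K i * k i - t i := by linarith [ht'.2]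
        _ ≤ |K i * k i - t i| := le_abs_self _
        _ = |t i - K i * k i| := abs_sub_comm _ _
    · rw [not_le] at h
      calc δ ≤ t i - K i * k i := by linarith [ht'.1]
        _ ≤ |t i - K i * k i| := le_abs_self _
  -- Step 1 : first integral as a finite sum
  have hInt1 : (∫ t in B,
        ((∑' k : Fin d → ℤ, ∏ i, max (δ⁻¹ ^ 2 * (δ - |t i - K i * k i|)) 0 : ℝ) : ℂ) * F t)
      = ∑ k ∈ A, ∫ t in B,
          ((∏ i, max (δ⁻¹ ^ 2 * (δ - |t i - K i * k i|)) 0 : ℝ) : ℂ) * F t := by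
    rw [← integral_finset_sum A fun k _ =>
      (hatdF_integrable (fun i => K i * k i) hδ F hFm hFb).integrableOn]
    apply setIntegral_congr_fun hB
    intro t ht
    dsimp only
    rw [tsum_eq_sum (s := A) fun k hk => hzero k hk t ht]
    push_cast
    rw [Finset.sum_mul]
  -- Step 2 : second tsum as a finite sum of indicators
  set S : Set (Fin d → ℤ) := {k | ∀ i, (K i * k i : ℝ) ∈ Icc 0 T} with hS
  set g : (Fin d → ℤ) → ℂ := fun k =>
    ∫ t : Fin d → ℝ, ((∏ i, max (δ⁻¹ ^ 2 * (δ - |t i - K i * k i|)) 0 : ℝ) : ℂ) * F t with hg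
  have hInt2 : (∑' k : {k : Fin d → ℤ // ∀ i, (K i * k i : ℝ) ∈ Icc 0 T},
        ∫ t : Fin d → ℝ,
          ((∏ i : Fin d, max (δ⁻¹ ^ 2 * (δ - |t i - K i * (k : Fin d → ℤ) i|)) 0 : ℝ) : ℂ) * F t)
      = ∑ k ∈ A, S.indicator g k := by
    rw [show (∑' k : {k : Fin d → ℤ // ∀ i, (K i * k i : ℝ) ∈ Icc 0 T},
        ∫ t : Fin d → ℝ,
          ((∏ i : Fin d, max (δ⁻¹ ^ 2 * (δ - |t i - K i * (k : Fin d → ℤ) i|)) 0 : ℝ) : ℂ) * F t)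
        = ∑' k : ↥S, g ↑k from rfl, tsum_subtype S g]
    apply tsum_eq_sum
    intro k hk
    apply indicator_of_notMem
    intro hkS
    apply hk
    rw [memA]
    intro i
    have h1 : (K i * k i : ℝ) ∈ Icc 0 T := hkS i
    exact ⟨by linarith [h1.1, hδ.le], by linarith [h1.2, hδ.le]⟩
  rw [hInt1, hInt2, ← Finset.sum_sub_distrib]
  -- boundary lattice points
  set Bd : Finset (Fin d → ℤ) :=
    A.filter (fun k => ¬ ∀ i, δ ≤ K i * k i ∧ K i * k i ≤ T - δ) with hBd
  have hvanish : ∀ k ∈ A, k ∉ Bd →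
      ((∫ t in B, ((∏ i, max (δ⁻¹ ^ 2 * (δ - |t i - K i * k i|)) 0 : ℝ) : ℂ) * F t)
        - S.indicator g k) = 0 := by
    intro k hkA hkBd
    have hIC : ∀ i, δ ≤ K i * k i ∧ K i * k i ≤ T - δ := by
      by_contra h
      exact hkBd (Finset.mem_filter.2 ⟨hkA, h⟩)
    have hkS : k ∈ S := by
      intro i
      exact ⟨le_trans hδ.le (hIC i).1, le_trans (hIC i).2 (by linarith)⟩
    rw [indicator_of_mem hkS, hg]
    rw [setIntegral_eq_integral_of_forall_compl_eq_zero, sub_self]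
    intro t ht
    simp only [hBdef, mem_setOf_eq] at ht
    push_neg at ht
    obtain ⟨i, hi⟩ := ht
    have hzero' : (∏ i, max (δ⁻¹ ^ 2 * (δ - |t i - K i * k i|)) 0 : ℝ) = 0 := by
      apply Finset.prod_eq_zero (Finset.mem_univ i)
      apply hat_eq_zero
      rw [mem_Icc, not_and_or] at hi
      rcases hi with h | h <;> rw [not_le] at h
      · calc δ ≤ K i * k i - t i := by linarith [(hIC i).1]
          _ ≤ |K i * k i - t i| := le_abs_self _
          _ = |t i - K i * k i| := abs_sub_comm _ _
      · calc δ ≤ t i - K i * k i := by linarith [(hIC i).2]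
          _ ≤ _ := le_abs_self _
    rw [hzero']
    simp
  rw [(Finset.sum_subset (Finset.filter_subset _ A) hvanish).symm]
  -- counting : single-coordinate interval cardinality
  have hIccCard : ∀ j, ((Finset.Icc ⌈-δ / K j⌉ ⌊(T + δ) / K j⌋).card : ℝ) ≤ 3 * T / K j := by
    intro j
    rw [Int.card_Icc]
    rcases le_or_gt ⌈-δ / K j⌉ ⌊(T + δ) / K j⌋ with hab | hab
    · have h0 : (0:ℤ) ≤ ⌊(T + δ) / K j⌋ + 1 - ⌈-δ / K j⌉ := by omega
      have hcast : ((⌊(T + δ) / K j⌋ + 1 - ⌈-δ / K j⌉).toNat : ℝ)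
          = ((⌊(T + δ) / K j⌋ : ℝ) + 1 - (⌈-δ / K j⌉ : ℝ)) := by
        rw_mod_cast [Int.toNat_of_nonneg h0]
      rw [hcast, le_div_iff₀ (hK0 j)]
      have h3 : ((⌊(T + δ) / K j⌋ : ℝ)) * K j ≤ T + δ := by
        rw [← le_div_iff₀ (hK0 j)]; exact Int.floor_le _
      have h4 : -δ ≤ (⌈-δ / K j⌉ : ℝ) * K j := by
        rw [← div_le_iff₀ (hK0 j)]; exact Int.le_ceil _
      have h5 := hδK j; have h6 := hKT j; have h7 := hK0 j
      nlinarith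
    · have h0 : ⌊(T + δ) / K j⌋ + 1 - ⌈-δ / K j⌉ ≤ 0 := by omega
      rw [Int.toNat_of_nonpos h0]
      simp only [Nat.cast_zero]
      exact div_nonneg (by linarith) (hK0 j).le
  -- counting : at most 2 lattice points per coordinate near the boundary
  have hsmall : ∀ i, ((Finset.Icc ⌈-δ / K i⌉ ⌊(T + δ) / K i⌋).filter
      (fun n : ℤ => K i * n < δ ∨ T - δ < K i * n)).card ≤ 2 := by
    intro i
    have hKi := hK0 i
    have h2δ := hδK i
    have key : ∀ (u v : ℝ), v - u ≤ 2 * δ → ∀ a ∈ (Finset.Icc ⌈-δ / K i⌉ ⌊(T + δ) / K i⌋),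
        ∀ b ∈ (Finset.Icc ⌈-δ / K i⌉ ⌊(T + δ) / K i⌋),
        u ≤ K i * a → K i * a ≤ v → u ≤ K i * b → K i * b ≤ v → a = b := by
      intro u v huv a _ b _ ha1 ha2 hb1 hb2
      have hd1 : K i * ((a:ℝ) - b) < K i * 1 := by
        rw [mul_sub, mul_one]; nlinarith
      have hd2 : K i * (-1:ℝ) < K i * ((a:ℝ) - b) := by
        rw [mul_sub, mul_neg_one]; nlinarith
      have e1 : (a:ℝ) - b < 1 := lt_of_mul_lt_mul_left hd1 hKi.le
      have e2 : (-1:ℝ) < (a:ℝ) - b := lt_of_mul_lt_mul_left hd2 hKi.le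
      have h1' : (a - b : ℤ) < 1 := by exact_mod_cast (show ((a - b : ℤ):ℝ) < 1 by push_cast; linarith)
      have h2' : (-1:ℤ) < a - b := by exact_mod_cast (show (-1:ℝ) < ((a - b : ℤ):ℝ) by push_cast; linarith)
      omega
    rw [Finset.filter_or]
    refine (Finset.card_union_le _ _).trans ?_
    have hc1 : ((Finset.Icc ⌈-δ / K i⌉ ⌊(T + δ) / K i⌋).filter
        (fun n : ℤ => K i * n < δ)).card ≤ 1 := by
      rw [Finset.card_le_one]
      intro a ha b hb
      obtain ⟨haI, ha2⟩ := Finset.mem_filter.1 ha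
      obtain ⟨hbI, hb2⟩ := Finset.mem_filter.1 hb
      have hlow : ∀ n ∈ (Finset.Icc ⌈-δ / K i⌉ ⌊(T + δ) / K i⌋), -δ ≤ K i * n := by
        intro n hn
        have := (Finset.mem_Icc.1 hn).1
        have h' : -δ / K i ≤ (n : ℝ) := Int.ceil_le.1 this
        rw [div_le_iff₀ (hK0 i)] at h'
        linarith [mul_comm ((n:ℝ)) (K i)]
      exact key (-δ) δ (by linarith) a haI b hbI (hlow a haI) ha2.le (hlow b hbI) hb2.le
    have hc2 : ((Finset.Icc ⌈-δ / K i⌉ ⌊(T + δ) / K i⌋).filter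
        (fun n : ℤ => T - δ < K i * n)).card ≤ 1 := by
      rw [Finset.card_le_one]
      intro a ha b hb
      obtain ⟨haI, ha2⟩ := Finset.mem_filter.1 ha
      obtain ⟨hbI, hb2⟩ := Finset.mem_filter.1 hb
      have hhigh : ∀ n ∈ (Finset.Icc ⌈-δ / K i⌉ ⌊(T + δ) / K i⌋), K i * n ≤ T + δ := by
        intro n hn
        have := (Finset.mem_Icc.1 hn).2
        have h' : (n : ℝ) ≤ (T + δ) / K i := Int.le_floor.1 this
        rw [le_div_iff₀ (hK0 i)] at h'
        linarith [mul_comm ((n:ℝ)) (K i)]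
      exact key (T - δ) (T + δ) (by linarith) a haI b hbI ha2.le (hhigh a haI) hb2.le (hhigh b hbI)
    omega
  -- counting : boundary filters
  have hcard2 : ∀ i, (A.filter fun k => K i * k i < δ ∨ T - δ < K i * k i).card
      ≤ 2 * ∏ j ∈ Finset.univ.erase i, (Finset.Icc ⌈-δ / K j⌉ ⌊(T + δ) / K j⌋).card := by
    intro i
    have hsub2 : (A.filter fun k => K i * k i < δ ∨ T - δ < K i * k i) ⊆
        Fintype.piFinset (Function.update
          (fun j => Finset.Icc ⌈-δ / K j⌉ ⌊(T + δ) / K j⌋) i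
          ((Finset.Icc ⌈-δ / K i⌉ ⌊(T + δ) / K i⌋).filter
            (fun n : ℤ => K i * n < δ ∨ T - δ < K i * n))) := by
      intro k hk
      obtain ⟨hkA, hkP⟩ := Finset.mem_filter.1 hk
      rw [Fintype.mem_piFinset]
      intro j
      rcases eq_or_ne j i with rfl | hj
      · rw [Function.update_self]
        exact Finset.mem_filter.2 ⟨Fintype.mem_piFinset.1 hkA j, hkP⟩
      · rw [Function.update_of_ne hj]
        exact Fintype.mem_piFinset.1 hkA j
    refine (Finset.card_le_card hsub2).trans ?_
    rw [Fintype.card_piFinset]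
    simp only [Function.apply_update (fun _ s => Finset.card s)]
    rw [Finset.prod_update_of_mem (Finset.mem_univ i), ← Finset.erase_eq]
    exact Nat.mul_le_mul (hsmall i) le_rfl
  have hsub : Bd ⊆ Finset.univ.biUnion
      (fun i => A.filter fun k => K i * k i < δ ∨ T - δ < K i * k i) := by
    intro k hk
    rw [Finset.mem_biUnion]
    obtain ⟨hkA, hkn⟩ := Finset.mem_filter.1 hk
    obtain ⟨i, hi⟩ := not_forall.1 hkn
    refine ⟨i, Finset.mem_univ i, Finset.mem_filter.2 ⟨hkA, ?_⟩⟩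
    rcases not_and_or.1 hi with h | h
    · exact Or.inl (not_le.1 h)
    · exact Or.inr (not_le.1 h)
  have cardBd : (Bd.card : ℝ) ≤ ∑ i, 2 * ((3*T)^(d-1) * K i / ∏ j, K j) := by
    have hn : Bd.card ≤ ∑ i, 2 * ∏ j ∈ Finset.univ.erase i,
        (Finset.Icc ⌈-δ / K j⌉ ⌊(T + δ) / K j⌋).card :=
      le_trans (Finset.card_le_card hsub)
        (le_trans (Finset.card_biUnion_le) (Finset.sum_le_sum fun i _ => hcard2 i))
    calc (Bd.card : ℝ)
        ≤ ((∑ i, 2 * ∏ j ∈ Finset.univ.erase i,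
            (Finset.Icc ⌈-δ / K j⌉ ⌊(T + δ) / K j⌋).card : ℕ) : ℝ) := by exact_mod_cast hn
      _ = ∑ i, 2 * ∏ j ∈ Finset.univ.erase i,
            ((Finset.Icc ⌈-δ / K j⌉ ⌊(T + δ) / K j⌋).card : ℝ) := by push_cast; rfl
      _ ≤ ∑ i, 2 * ((3*T)^(d-1) * K i / ∏ j, K j) := by
          apply Finset.sum_le_sum
          intro i _
          have hp : ∏ j ∈ Finset.univ.erase i,
              ((Finset.Icc ⌈-δ / K j⌉ ⌊(T + δ) / K j⌋).card : ℝ)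
              ≤ ∏ j ∈ Finset.univ.erase i, (3 * T / K j) :=
            Finset.prod_le_prod (fun j _ => Nat.cast_nonneg _) (fun j _ => hIccCard j)
          have heq : ∏ j ∈ Finset.univ.erase i, (3 * T / K j)
              = (3*T)^(d-1) * K i / ∏ j, K j := by
            rw [Finset.prod_div_distrib, Finset.prod_const,
              Finset.card_erase_of_mem (Finset.mem_univ i), Finset.card_univ, Fintype.card_fin]
            have herase : (∏ j ∈ Finset.univ.erase i, K j) * K i = ∏ j, K j :=
              Finset.prod_erase_mul _ _ (Finset.mem_univ i)
            have he0 : (0:ℝ) < ∏ j ∈ Finset.univ.erase i, K j :=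
              Finset.prod_pos fun j _ => hK0 j
            rw [div_eq_div_iff he0.ne' hprodK.ne', ← herase]
            ring
          rw [← heq]
          linarith
  -- final assembly
  have hsup0 : (0:ℝ) < ⨆ j, K j := lt_of_lt_of_le (hK0 i0) (hsupK i0)
  calc ‖∑ k ∈ Bd, ((∫ t in B,
          ((∏ i, max (δ⁻¹ ^ 2 * (δ - |t i - K i * k i|)) 0 : ℝ) : ℂ) * F t)
        - S.indicator g k)‖
      ≤ ∑ k ∈ Bd, ‖(∫ t in B,
          ((∏ i, max (δ⁻¹ ^ 2 * (δ - |t i - K i * k i|)) 0 : ℝ) : ℂ) * F t)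
        - S.indicator g k‖ := norm_sum_le _ _
    _ ≤ ∑ _k ∈ Bd, ((2:ℝ)^d * M + 2^d * M) := by
        apply Finset.sum_le_sum
        intro k _
        refine (norm_sub_le _ _).trans (add_le_add ?_ ?_)
        · exact hatdF_norm_integral_le (fun i => K i * k i) hδ hM F hFm hFb B
        · refine (norm_indicator_le_norm_self g k).trans ?_
          have h9 := hatdF_norm_integral_le (fun i => K i * k i) hδ hM F hFm hFb univ
          rw [setIntegral_univ] at h9
          exact h9
    _ = (Bd.card : ℝ) * (2^d * M + 2^d * M) := by
        rw [Finset.sum_const, nsmul_eq_mul]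
    _ ≤ (∑ i, 2 * ((3*T)^(d-1) * K i / ∏ j, K j)) * (2^d * M + 2^d * M) := by
        have h2d : (0:ℝ) < 2^d := pow_pos two_pos d
        have := mul_nonneg h2d.le hM
        apply mul_le_mul_of_nonneg_right cardBd (by linarith)
    _ ≤ ((d:ℝ) * (2 * ((3*T)^(d-1) * (⨆ j, K j) / ∏ j, K j))) * (2^d * M + 2^d * M) := by
        have h2d : (0:ℝ) < 2^d := pow_pos two_pos d
        have hnn := mul_nonneg h2d.le hM
        apply mul_le_mul_of_nonneg_right _ (by linarith)
        calc ∑ i, 2 * ((3*T)^(d-1) * K i / ∏ j, K j)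
            ≤ ∑ _i : Fin d, 2 * ((3*T)^(d-1) * (⨆ j, K j) / ∏ j, K j) := by
              apply Finset.sum_le_sum
              intro i _
              have h30 : (0:ℝ) ≤ (3*T)^(d-1) := pow_nonneg (by linarith) _
              have h1 := (div_le_div_iff_of_pos_right hprodK).2
                (mul_le_mul_of_nonneg_left (hsupK i) h30)
              linarith [h1]
          _ = (d:ℝ) * (2 * ((3*T)^(d-1) * (⨆ j, K j) / ∏ j, K j)) := by
              rw [Finset.sum_const, Finset.card_univ, Fintype.card_fin, nsmul_eq_mul]
    _ = (d : ℝ) * 2 ^ (d + 2) * 3 ^ (d - 1) * M * T ^ (d - 1) * (⨆ i, K i) / ∏ i, K i := by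
        rw [mul_pow]
        field_simp
        ring
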